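/- The group with presentation ⟨a, b, c | a² = b³ = c⁵ = abc = 1⟩ (the (2,3,5) triangle group) is isomorphic to the alternating group A5. -/

import Mathlib

open FreeGroup

/-- The relations of the (2,3,5) triangle group presentation
`⟨a, b, c | a² = b³ = c⁵ = abc = 1⟩` on three generators. -/
def triangle235Rels : Set (FreeGroup (Fin 3)) :=
  {(of 0) ^ 2, (of 1) ^ 3, (of 2) ^ 5, of 0 * of 1 * of 2}

namespace T235

abbrev Dl := PresentedGroup triangle235Rels

def a : Dl := PresentedGroup.of 0
def b : Dl := PresentedGroup.of 1
def c : Dl := PresentedGroup.of 2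

lemma mk_rel {r : FreeGroup (Fin 3)} (h : r ∈ triangle235Rels) :
    PresentedGroup.mk triangle235Rels r = 1 :=
  (QuotientGroup.eq_one_iff r).2 (Subgroup.subset_normalClosure h)

lemma rel_a : a ^ 2 = 1 := by
  have h := mk_rel (show (of 0)^2 ∈ triangle235Rels by simp [triangle235Rels])
  rw [_root_.map_pow] at h
  exact h

lemma rel_b : b ^ 3 = 1 := by
  have h := mk_rel (show (of 1)^3 ∈ triangle235Rels by simp [triangle235Rels])
  rw [_root_.map_pow] at h
  exact h

lemma rel_c : c ^ 5 = 1 := by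
  have h := mk_rel (show (of 2)^5 ∈ triangle235Rels by simp [triangle235Rels])
  rw [_root_.map_pow] at h
  exact h

lemma rel_abc : a * b * c = 1 := by
  have h := mk_rel (show of 0 * of 1 * of 2 ∈ triangle235Rels by simp [triangle235Rels])
  exact h

lemma c_eq : c = (a * b)⁻¹ := eq_inv_of_mul_eq_one_right rel_abc

lemma rel_ab5 : (a * b) ^ 5 = 1 := by
  have : ((a*b)⁻¹) ^ 5 = 1 := by rw [← c_eq]; exact rel_c
  rw [inv_pow] at this
  exact inv_eq_one.mp this

def gen : Bool → Dl
  | false => a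
  | true => b

def eval (w : List Bool) : Dl := (w.map gen).prod

lemma eval_append (u v : List Bool) : eval (u ++ v) = eval u * eval v := by
  simp [eval]

def rule : Fin 3 → List Bool
  | 0 => [false, false]
  | 1 => [true, true, true]
  | 2 => [false, true, false, true, false, true, false, true, false, true]

lemma eval_rule (i : Fin 3) : eval (rule i) = 1 := by
  fin_cases i
  · show eval [false, false] = 1
    have h := rel_a; rw [pow_two] at h
    simpa [eval, gen] using h
  · show eval [true, true, true] = 1
    have h := rel_b; rw [pow_succ, pow_two] at h
    simpa [eval, gen, mul_assoc] using h
  · show eval [false, true, false, true, false, true, false, true, false, true] = 1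
    simpa [eval, gen, pow_succ, mul_assoc] using rel_ab5

def applyStep (w : List Bool) (s : ℕ × Fin 3 × Bool) : Option (List Bool) :=
  if s.2.2 then
    some (w.take s.1 ++ rule s.2.1 ++ w.drop s.1)
  else if (w.drop s.1).take (rule s.2.1).length = rule s.2.1 then
    some (w.take s.1 ++ (w.drop s.1).drop (rule s.2.1).length)
  else none

lemma eval_applyStep {w w' : List Bool} {s : ℕ × Fin 3 × Bool} (h : applyStep w s = some w') :
    eval w = eval w' := by
  obtain ⟨n, i, ins⟩ := s
  cases ins with
  | true =>
    simp only [applyStep, if_true] at h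
    injection h with h
    subst h
    conv_lhs => rw [← List.take_append_drop n w]
    rw [eval_append, eval_append, eval_append, eval_rule, mul_one]
  | false =>
    simp only [applyStep, Bool.false_eq_true, if_false] at h
    by_cases hr : (w.drop n).take (rule i).length = rule i
    · rw [if_pos hr] at h
      injection h with h
      subst h
      conv_lhs => rw [← List.take_append_drop n w]
      conv_lhs => rw [show w.drop n = (w.drop n).take (rule i).length ++ (w.drop n).drop (rule i).length from (List.take_append_drop _ _).symm]
      rw [hr, eval_append, eval_append, eval_rule, one_mul, ← eval_append]
    · rw [if_neg hr] at h
      exact absurd h (by simp)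

def run (w : List Bool) : List (ℕ × Fin 3 × Bool) → Option (List Bool)
  | [] => some w
  | s :: t =>
    match applyStep w s with
    | some w' => run w' t
    | none => none

lemma eval_run : ∀ {ss : List (ℕ × Fin 3 × Bool)} {w w' : List Bool},
    run w ss = some w' → eval w = eval w' := by
  intro ss
  induction ss with
  | nil => intro w w' h; injection h with h; rw [h]
  | cons s t ih =>
    intro w w' h
    unfold run at h
    cases hs : applyStep w s with
    | none => rw [hs] at h; exact absurd h (by simp)
    | some w1 => rw [hs] at h; exact (eval_applyStep hs).trans (ih h)



def ap : Equiv.Perm (Fin 5) := Equiv.swap 0 1 * Equiv.swap 2 3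
def bp : Equiv.Perm (Fin 5) := Equiv.swap 1 2 * Equiv.swap 2 4

lemma ap_mem : ap ∈ alternatingGroup (Fin 5) := by
  rw [Equiv.Perm.mem_alternatingGroup, ap, _root_.map_mul,
    Equiv.Perm.sign_swap (by decide), Equiv.Perm.sign_swap (by decide)]
  decide

lemma bp_mem : bp ∈ alternatingGroup (Fin 5) := by
  rw [Equiv.Perm.mem_alternatingGroup, bp, _root_.map_mul,
    Equiv.Perm.sign_swap (by decide), Equiv.Perm.sign_swap (by decide)]
  decide

def aS : alternatingGroup (Fin 5) := ⟨ap, ap_mem⟩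
def bS : alternatingGroup (Fin 5) := ⟨bp, bp_mem⟩

-- sanity: matches python convention alpha=(1,0,3,2,4), beta=(0,2,4,3,1)
example : ap 0 = 1 ∧ ap 2 = 3 ∧ bp 1 = 2 ∧ bp 2 = 4 ∧ bp 4 = 1 := by decide

def genS : Bool → alternatingGroup (Fin 5)
  | false => aS
  | true => bS

def evalS (w : List Bool) : alternatingGroup (Fin 5) := (w.map genS).prod

example : aS ^ 2 = 1 := by decide
example : bS ^ 3 = 1 := by decide
example : ((aS * bS)⁻¹) ^ 5 = 1 := by decide


def wordL : List (List Bool) := [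
  [],
  [false],
  [true],
  [false, true],
  [true, false],
  [true, true],
  [false, true, false],
  [false, true, true],
  [true, false, true],
  [true, true, false],
  [false, true, false, true],
  [false, true, true, false],
  [true, false, true, false],
  [true, false, true, true],
  [true, true, false, true],
  [false, true, false, true, false],
  [false, true, false, true, true],
  [false, true, true, false, true],
  [true, false, true, false, true],
  [true, false, true, true, false],
  [true, true, false, true, false],
  [true, true, false, true, true],
  [false, true, false, true, false, true],
  [false, true, false, true, true, false],
  [false, true, true, false, true, false],
  [false, true, true, false, true, true],
  [true, false, true, false, true, true],
  [true, false, true, true, false, true],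
  [true, true, false, true, false, true],
  [false, true, false, true, false, true, true],
  [false, true, false, true, true, false, true],
  [false, true, true, false, true, false, true],
  [true, false, true, false, true, true, false],
  [true, false, true, true, false, true, false],
  [true, false, true, true, false, true, true],
  [true, true, false, true, false, true, true],
  [false, true, false, true, false, true, true, false],
  [false, true, false, true, true, false, true, false],
  [false, true, false, true, true, false, true, true],
  [false, true, true, false, true, false, true, true],
  [true, false, true, false, true, true, false, true],
  [true, false, true, true, false, true, false, true],
  [true, true, false, true, false, true, true, false],
  [false, true, false, true, false, true, true, false, true],
  [false, true, false, true, true, false, true, false, true],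
  [false, true, true, false, true, false, true, true, false],
  [true, false, true, false, true, true, false, true, false],
  [true, false, true, false, true, true, false, true, true],
  [true, false, true, true, false, true, false, true, true],
  [true, true, false, true, false, true, true, false, true],
  [false, true, false, true, false, true, true, false, true, false],
  [false, true, false, true, false, true, true, false, true, true],
  [false, true, false, true, true, false, true, false, true, true],
  [false, true, true, false, true, false, true, true, false, true],
  [true, false, true, true, false, true, false, true, true, false],
  [true, true, false, true, false, true, true, false, true, false],
  [false, true, false, true, true, false, true, false, true, true, false],
  [false, true, true, false, true, false, true, true, false, true, false],
  [true, false, true, true, false, true, false, true, true, false, true],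
  [false, true, false, true, true, false, true, false, true, true, false, true]]
def waL : List (Fin 60) := [1, 0, 4, 6, 2, 9, 3, 11, 12, 5, 15, 7, 8, 19, 20, 10, 23, 24, 25, 13, 14, 22, 21, 16, 17, 18, 32, 33, 34, 36, 37, 38, 26, 27, 28, 42, 29, 30, 31, 45, 46, 47, 35, 50, 51, 39, 40, 41, 54, 55, 43, 44, 56, 57, 48, 49, 52, 53, 59, 58]
def wbL : List (Fin 60) := [2, 3, 5, 7, 8, 0, 10, 1, 13, 14, 16, 17, 18, 4, 21, 22, 6, 25, 26, 27, 28, 9, 29, 30, 31, 11, 12, 34, 35, 15, 38, 39, 40, 41, 19, 20, 43, 44, 23, 24, 47, 48, 49, 51, 52, 53, 45, 32, 33, 50, 42, 36, 37, 46, 58, 54, 59, 56, 55, 57]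
def certAL : List (List (ℕ × Fin 3 × Bool)) := [
  [],
  [(0, 0, false)],
  [],
  [],
  [(1, 0, false)],
  [],
  [(2, 0, false)],
  [],
  [],
  [(2, 0, false)],
  [],
  [(3, 0, false)],
  [(3, 0, false)],
  [],
  [],
  [(4, 0, false)],
  [],
  [],
  [(6, 1, true), (7, 0, true), (8, 1, true), (0, 0, true), (1, 2, false)],
  [(4, 0, false)],
  [(4, 0, false)],
  [(3, 2, true), (12, 1, false), (2, 0, false), (0, 1, false), (6, 0, false)],
  [(0, 1, true), (2, 0, true), (12, 1, true), (3, 2, false)],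
  [(5, 0, false)],
  [(5, 0, false)],
  [(1, 2, true), (0, 0, false), (8, 1, false), (7, 0, false), (6, 1, false), (5, 0, false)],
  [],
  [],
  [(7, 1, true), (8, 0, true), (9, 1, true), (1, 0, true), (2, 2, false)],
  [],
  [],
  [(8, 1, true), (9, 0, true), (10, 1, true), (2, 0, true), (3, 2, false)],
  [(6, 0, false)],
  [(6, 0, false)],
  [(2, 2, true), (1, 0, false), (9, 1, false), (8, 0, false), (7, 1, false), (6, 0, false)],
  [],
  [(7, 0, false)],
  [(7, 0, false)],
  [(3, 2, true), (2, 0, false), (10, 1, false), (9, 0, false), (8, 1, false), (7, 0, false)],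
  [],
  [],
  [(9, 1, true), (10, 0, true), (11, 1, true), (3, 0, true), (4, 2, false)],
  [(7, 0, false)],
  [],
  [(10, 1, true), (11, 0, true), (12, 1, true), (4, 0, true), (5, 2, false)],
  [(8, 0, false)],
  [(8, 0, false)],
  [(4, 2, true), (3, 0, false), (11, 1, false), (10, 0, false), (9, 1, false), (8, 0, false)],
  [],
  [],
  [(9, 0, false)],
  [(5, 2, true), (4, 0, false), (12, 1, false), (11, 0, false), (10, 1, false), (9, 0, false)],
  [],
  [],
  [(9, 0, false)],
  [(9, 0, false)],
  [(10, 0, false)],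
  [(10, 0, false)],
  [],
  []]
def certBL : List (List (ℕ × Fin 3 × Bool)) := [
  [],
  [],
  [],
  [],
  [],
  [(0, 1, false)],
  [],
  [(1, 1, false)],
  [],
  [],
  [],
  [],
  [],
  [(2, 1, false)],
  [],
  [],
  [(3, 1, false)],
  [],
  [],
  [],
  [],
  [(3, 1, false)],
  [],
  [],
  [],
  [(4, 1, false)],
  [(4, 1, false)],
  [],
  [],
  [(5, 1, false)],
  [],
  [],
  [],
  [],
  [(5, 1, false)],
  [(5, 1, false)],
  [],
  [],
  [(6, 1, false)],
  [(6, 1, false)],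
  [],
  [],
  [],
  [],
  [],
  [],
  [(0, 0, true), (7, 0, true), (14, 0, true), (1, 1, true), (3, 0, true), (13, 1, true), (4, 2, false), (13, 1, true), (5, 0, true), (6, 2, false)],
  [(7, 1, false)],
  [(7, 1, false)],
  [(5, 2, true), (14, 1, false), (13, 0, false), (12, 1, false), (3, 2, true), (14, 0, false), (12, 1, false), (2, 0, false), (0, 1, false), (6, 0, false)],
  [(11, 0, true), (12, 1, true), (13, 0, true), (14, 1, true), (6, 0, true), (7, 2, false), (8, 0, true), (9, 1, true), (0, 2, false)],
  [(8, 1, false)],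
  [(8, 1, false)],
  [(6, 2, true), (15, 1, false), (14, 0, false), (13, 1, false), (4, 2, true), (15, 0, false), (13, 1, false), (3, 0, false), (1, 1, false), (7, 0, false), (0, 0, false)],
  [],
  [(1, 0, true), (8, 0, true), (2, 1, true), (4, 0, true), (14, 1, true), (5, 2, false), (13, 0, true), (14, 1, true), (6, 0, true), (7, 2, false)],
  [],
  [(2, 0, true), (9, 0, true), (3, 1, true), (5, 0, true), (15, 1, true), (6, 2, false), (14, 0, true), (15, 1, true), (7, 0, true), (8, 2, false)],
  [(7, 2, true), (6, 0, false), (14, 1, false), (13, 0, false), (12, 1, false), (2, 2, true), (11, 1, false), (10, 0, false), (9, 1, false), (8, 0, false), (1, 0, false)],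
  [(8, 2, true), (7, 0, false), (15, 1, false), (14, 0, false), (13, 1, false), (3, 2, true), (12, 1, false), (11, 0, false), (10, 1, false), (9, 0, false), (2, 0, false)]]
def certW : List (ℕ × Fin 3 × Bool) := [(0, 0, true), (1, 2, false)]
-- W = [1, 0, 1, 0, 1, 0, 1, 0, 1] nodes [58, 55, 49, 50, 43, 51, 44, 52, 56, 59]

def wordf (i : Fin 60) : List Bool := wordL.getD i.1 []
def waf (i : Fin 60) : Fin 60 := waL.getD i.1 0
def wbf (i : Fin 60) : Fin 60 := wbL.getD i.1 0
def certA (i : Fin 60) : List (ℕ × Fin 3 × Bool) := certAL.getD i.1 []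
def certB (i : Fin 60) : List (ℕ × Fin 3 × Bool) := certBL.getD i.1 []
def pS (i : Fin 60) : alternatingGroup (Fin 5) := evalS (wordf i)

set_option maxRecDepth 8000 in
lemma certB_ok : ∀ i : Fin 60, run (wordf i ++ [true]) (certB i) = some (wordf (wbf i)) := by decide

set_option maxRecDepth 8000 in
lemma certA_ok : ∀ i : Fin 60, i ≠ 58 → i ≠ 59 →
    run (wordf i ++ [false]) (certA i) = some (wordf (waf i)) := by decide

set_option maxRecDepth 8000 in
lemma certW_ok :
    run [true, false, true, false, true, false, true, false, true] certW = some [false] := by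
  decide

set_option maxRecDepth 8000 in
lemma pS_inj : Function.Injective pS := by decide

set_option maxRecDepth 8000 in
lemma pS_mulA : ∀ i : Fin 60, pS (waf i) = pS i * aS := by decide

set_option maxRecDepth 8000 in
lemma pS_mulB : ∀ i : Fin 60, pS (wbf i) = pS i * bS := by decide

lemma cardA5 : Fintype.card (alternatingGroup (Fin 5)) = 60 := by
  have h := two_mul_card_alternatingGroup (α := Fin 5)
  have h2 : Fintype.card (Equiv.Perm (Fin 5)) = 120 := by
    simp [Fintype.card_perm, Nat.factorial]
  rw [h2] at h
  omega

lemma pS_bij : Function.Bijective pS :=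
  (Fintype.bijective_iff_injective_and_card pS).2 ⟨pS_inj, by rw [Fintype.card_fin, cardA5]⟩

noncomputable def E : Fin 60 ≃ alternatingGroup (Fin 5) := Equiv.ofBijective pS pS_bij

lemma E_symm_pS (i : Fin 60) : E.symm (pS i) = i := E.symm_apply_apply i
lemma pS_E_symm (x : alternatingGroup (Fin 5)) : pS (E.symm x) = x := E.apply_symm_apply x

def fg : Fin 3 → alternatingGroup (Fin 5) := fun x =>
  if x = 0 then aS else if x = 1 then bS else (aS * bS)⁻¹

lemma hrels : ∀ r ∈ triangle235Rels, FreeGroup.lift fg r = 1 := by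
  intro r hr
  simp only [triangle235Rels, Set.mem_insert_iff, Set.mem_singleton_iff] at hr
  rcases hr with rfl | rfl | rfl | rfl
  · rw [_root_.map_pow, FreeGroup.lift_apply_of]; decide
  · rw [_root_.map_pow, FreeGroup.lift_apply_of]; decide
  · rw [_root_.map_pow, FreeGroup.lift_apply_of]; decide
  · rw [_root_.map_mul, _root_.map_mul, FreeGroup.lift_apply_of, FreeGroup.lift_apply_of, FreeGroup.lift_apply_of]; decide

def phi : Dl →* alternatingGroup (Fin 5) := PresentedGroup.toGroup hrels

lemma phi_a : phi a = aS := PresentedGroup.toGroup.of hrels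
lemma phi_b : phi b = bS := PresentedGroup.toGroup.of hrels

lemma phi_eval : ∀ w : List Bool, phi (eval w) = evalS w := by
  intro w
  induction w with
  | nil => simp [eval, evalS]
  | cons x t ih =>
    have h1 : eval (x :: t) = gen x * eval t := by simp [eval]
    have h2 : evalS (x :: t) = genS x * evalS t := by simp [evalS]
    rw [h1, h2, _root_.map_mul, ih]
    cases x <;> simp [gen, genS, phi_a, phi_b]

lemma factBm (i : Fin 60) : eval (wordf i) * b = eval (wordf (wbf i)) := by
  have h := eval_run (certB_ok i)
  rw [eval_append] at h
  simpa [eval, gen] using h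

lemma chainstep {i j : Fin 60} {l : Bool} (h : eval (wordf i ++ [l]) = eval (wordf j))
    (r : List Bool) : eval (wordf i) * eval (l :: r) = eval (wordf j) * eval r := by
  have hc : (l :: r) = [l] ++ r := rfl
  rw [hc, eval_append, ← mul_assoc, ← eval_append, h]

lemma factA58 : eval (wordf 58) * a = eval (wordf 59) := by
  have hW : eval [false] = eval [true, false, true, false, true, false, true, false, true] :=
    (eval_run certW_ok).symm
  have ha : a = eval [true, false, true, false, true, false, true, false, true] := by
    simpa [eval, gen] using hW
  rw [ha]
  calc eval (wordf 58) * eval [true, false, true, false, true, false, true, false, true]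
      = eval (wordf 55) * eval [false, true, false, true, false, true, false, true] := chainstep (eval_run (certB_ok 58)) _
    _ = eval (wordf 49) * eval [true, false, true, false, true, false, true] := chainstep (eval_run (certA_ok 55 (by decide) (by decide))) _
    _ = eval (wordf 50) * eval [false, true, false, true, false, true] := chainstep (eval_run (certB_ok 49)) _
    _ = eval (wordf 43) * eval [true, false, true, false, true] := chainstep (eval_run (certA_ok 50 (by decide) (by decide))) _
    _ = eval (wordf 51) * eval [false, true, false, true] := chainstep (eval_run (certB_ok 43)) _
    _ = eval (wordf 44) * eval [true, false, true] := chainstep (eval_run (certA_ok 51 (by decide) (by decide))) _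
    _ = eval (wordf 52) * eval [false, true] := chainstep (eval_run (certB_ok 44)) _
    _ = eval (wordf 56) * eval [true] := chainstep (eval_run (certA_ok 52 (by decide) (by decide))) _
    _ = eval (wordf 59) := by rw [← eval_append]; exact eval_run (certB_ok 56)

lemma factAm (i : Fin 60) : eval (wordf i) * a = eval (wordf (waf i)) := by
  by_cases h1 : i = 58
  · subst h1; exact factA58
  by_cases h2 : i = 59
  · subst h2
    show eval (wordf 59) * a = eval (wordf 58)
    rw [← factA58, mul_assoc, show a * a = 1 by rw [← pow_two]; exact rel_a, mul_one]
  · have h := eval_run (certA_ok i h1 h2)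
    rw [eval_append] at h
    simpa [eval, gen] using h

def P (g : Dl) : Prop :=
  ∀ i : Fin 60, eval (wordf i) * g = eval (wordf (E.symm (pS i * phi g)))

lemma P_one : P 1 := by
  intro i
  rw [_root_.map_one, mul_one, mul_one, E_symm_pS]

lemma P_a : P a := by
  intro i
  rw [phi_a, ← pS_mulA i, E_symm_pS]
  exact factAm i

lemma P_b : P b := by
  intro i
  rw [phi_b, ← pS_mulB i, E_symm_pS]
  exact factBm i

lemma P_mul {g h : Dl} (hg : P g) (hh : P h) : P (g * h) := by
  intro i
  have hx := hh (E.symm (pS i * phi g))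
  rw [pS_E_symm] at hx
  rw [show phi (g * h) = phi g * phi h from _root_.map_mul phi g h, ← mul_assoc]
  calc eval (wordf i) * g * h = eval (wordf (E.symm (pS i * phi g))) * h := by rw [hg i]
    _ = eval (wordf (E.symm (pS i * phi g * phi h))) := hx

lemma P_inv {g : Dl} (hg : P g) : P g⁻¹ := by
  intro i
  have h2 := hg (E.symm (pS i * (phi g)⁻¹))
  rw [pS_E_symm, inv_mul_cancel_right, E_symm_pS] at h2
  rw [_root_.map_inv, ← h2, mul_inv_cancel_right]

lemma P_c : P c := by
  have h := P_inv (P_mul P_a P_b)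
  rwa [← c_eq] at h

lemma P_all : ∀ g : Dl, P g := by
  intro g
  refine PresentedGroup.induction_on g ?_
  intro z
  refine FreeGroup.induction_on
    (C := fun z => P (PresentedGroup.mk triangle235Rels z)) z ?_ ?_ ?_ ?_
  · show P (PresentedGroup.mk triangle235Rels 1)
    rw [_root_.map_one]; exact P_one
  · intro x
    fin_cases x
    · exact P_a
    · exact P_b
    · exact P_c
  · intro x hx
    rw [_root_.map_inv]
    exact P_inv hx
  · intro x y hx hy
    rw [_root_.map_mul]
    exact P_mul hx hy

end T235

/-- The (2,3,5) triangle group `⟨a,b,c | a² = b³ = c⁵ = abc = 1⟩` is isomorphic to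
the alternating group `A₅`. -/
theorem triangle235_iso_a5 :
    Nonempty (PresentedGroup triangle235Rels ≃* alternatingGroup (Fin 5)) := by
  refine ⟨MulEquiv.ofBijective T235.phi ⟨?_, ?_⟩⟩
  · intro g h hgh
    have Hg := T235.P_all g 0
    have Hh := T235.P_all h 0
    rw [show T235.eval (T235.wordf 0) = 1 from rfl, one_mul,
      show T235.pS 0 = 1 from rfl, one_mul] at Hg Hh
    rw [hgh] at Hg
    exact Hg.trans Hh.symm
  · intro σ
    exact ⟨T235.eval (T235.wordf (T235.E.symm σ)), by
      rw [T235.phi_eval]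
      exact T235.pS_E_symm σ⟩
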